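/- The bilinear form on sl₂(Q) defined by (X, Y) = (x₁₁y₁₁ + x₁₂y₂₁ + x₂₁y₁₂ + x₂₂y₂₂)₀, where a₀ denotes the degree-(0,0) component of a ∈ Q with respect to the ℤ²-grading, is symmetric, nondegenerate, and invariant, i.e. ([a,b],c) = (a,[b,c]) for all a,b,c ∈ sl₂(Q). -/

import Mathlib

set_option linter.unusedVariables false
set_option maxHeartbeats 1000000

attribute [local instance] LieRing.ofAssociativeRing

lemma aux_zpow_comm {G : Type*} [Group G] (z a b : G) (hz : Commute z a)
    (h : b * a = z * (a * b)) : ∀ c : ℤ, b * a ^ c = z ^ c * (a ^ c * b) := by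
  intro c
  have hconj : b * a * b⁻¹ = z * a := by rw [h]; group
  have h1 : b * a ^ c * b⁻¹ = (b * a * b⁻¹) ^ c := by rw [conj_zpow]
  have h2 : (z * a) ^ c = z ^ c * a ^ c := hz.mul_zpow c
  have h3 := h1.trans (by rw [hconj, h2])
  calc b * a ^ c = (b * a ^ c * b⁻¹) * b := by group
    _ = (z ^ c * a ^ c) * b := by rw [h3]
    _ = z ^ c * (a ^ c * b) := by rw [mul_assoc]



/-- The ring `R = k[t₁^{±1}, t₂^{±1}]` of Laurent polynomials in two variables. -/
abbrev LaurentR (k : Type*) [Field k] : Type _ := AddMonoidAlgebra k (ℤ × ℤ)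

/-- The variable `t₁ ∈ R`. -/
noncomputable def tOne (k : Type*) [Field k] : LaurentR k :=
  AddMonoidAlgebra.single ((1 : ℤ), (0 : ℤ)) 1

/-- The variable `t₂ ∈ R`. -/
noncomputable def tTwo (k : Type*) [Field k] : LaurentR k :=
  AddMonoidAlgebra.single ((0 : ℤ), (1 : ℤ)) 1

/-- Let `Q = (t₁,t₂)` be the quaternion algebra over `R = k[t₁^{±1},t₂^{±1}]`, with its
`ℤ²`-grading `Q^{(a,b)} = k·iᵃjᵇ` (encoded by the `k`-basis `B` with `B(a,b) = iᵃjᵇ`),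
and let `a₀ := (B.repr a) (0,0)` denote the degree-`(0,0)` component of `a ∈ Q`.  Then the
bilinear form on `sl₂(Q) = [gl₂(Q), gl₂(Q)]` defined by
`(X,Y) = (x₁₁y₁₁ + x₁₂y₂₁ + x₂₁y₁₂ + x₂₂y₂₂)₀` is symmetric, invariant
(`([X,Y],Z) = (X,[Y,Z])`), and nondegenerate on `sl₂(Q)`. -/
theorem sl2_quaternion_form_symm_invariant_nondegenerate
    (k : Type*) [Field k] [IsAlgClosed k] [CharZero k]
    (Q : Type*) [Ring Q] [Algebra (LaurentR k) Q]
    [Algebra k Q] [IsScalarTower k (LaurentR k) Q]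
    (i j : Q)
    (hi : i * i = algebraMap (LaurentR k) Q (tOne k))
    (hj : j * j = algebraMap (LaurentR k) Q (tTwo k))
    (hij : i * j = -(j * i))
    (uI uJ : Qˣ) (huI : (uI : Q) = i) (huJ : (uJ : Q) = j)
    (B : Module.Basis (ℤ × ℤ) k Q)
    (hB : ∀ a b : ℤ, B (a, b) = ((uI ^ a * uJ ^ b : Qˣ) : Q))
    -- the bilinear form on `gl₂(Q)`:
    (Φ : Matrix (Fin 2) (Fin 2) Q → Matrix (Fin 2) (Fin 2) Q → k)
    (hΦ : ∀ X Y : Matrix (Fin 2) (Fin 2) Q,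
      Φ X Y = (B.repr (X 0 0 * Y 0 0 + X 0 1 * Y 1 0 + X 1 0 * Y 0 1 + X 1 1 * Y 1 1))
        ((0 : ℤ), (0 : ℤ))) :
    -- symmetric:
    (∀ X Y, Φ X Y = Φ Y X) ∧
    -- invariant:
    (∀ X Y Z, Φ ⁅X, Y⁆ Z = Φ X ⁅Y, Z⁆) ∧
    -- nondegenerate on `sl₂(Q) = [gl₂(Q), gl₂(Q)]`:
    (∀ X ∈ LieAlgebra.derivedSeries k (Matrix (Fin 2) (Fin 2) Q) 1,
      (∀ Y ∈ LieAlgebra.derivedSeries k (Matrix (Fin 2) (Fin 2) Q) 1, Φ X Y = 0) → X = 0) := by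
  classical
  have hbase : uJ * uI = (-1) * (uI * uJ) := by
    have hJI : uI * uJ = -(uJ * uI) := Units.ext (by simp [huI, huJ, hij])
    rw [neg_one_mul, hJI, neg_neg]
  have hc1 : ∀ c : ℤ, uJ * uI ^ c = (-1) ^ c * (uI ^ c * uJ) :=
    aux_zpow_comm (-1) uI uJ (Commute.neg_one_left uI) hbase
  have hc2 : ∀ c d : ℤ, uJ ^ d * uI ^ c = (-1) ^ (d * c) * (uI ^ c * uJ ^ d) := by
    intro c d
    have hbase2 : uI ^ c * uJ = (-1) ^ (-c) * (uJ * uI ^ c) := by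
      rw [hc1 c, ← mul_assoc, ← zpow_add, neg_add_cancel, zpow_zero, one_mul]
    have h := aux_zpow_comm ((-1) ^ (-c)) uJ (uI ^ c)
      (Commute.zpow_left (Commute.neg_one_left uJ) _) hbase2 d
    rw [h, ← mul_assoc, ← zpow_mul, ← zpow_add]
    have h0 : d * c + -c * d = 0 := by ring
    rw [h0, zpow_zero, one_mul]
  -- sign function
  set sg : ℤ → k := fun m => if Even m then (1 : k) else -1 with hsgdef
  have hsgval : ∀ m : ℤ, (((-1 : Qˣ) ^ m : Qˣ) : Q) = algebraMap k Q (sg m) := by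
    intro m
    rcases Int.even_or_odd m with he | ho
    · rw [he.neg_one_zpow]; simp [hsgdef, he]
    · have h1 : ((-1 : Qˣ)) ^ m = -1 := by
        obtain ⟨n, hn⟩ := ho
        subst hn
        rw [zpow_add, Even.neg_one_zpow ⟨n, two_mul n⟩, zpow_one, one_mul]
      have h2 : ¬ Even m := Int.not_even_iff_odd.mpr ho
      rw [h1]; simp [hsgdef, h2]
  -- multiplication of basis elements
  have hBm : ∀ p q : ℤ × ℤ, B p * B q = sg (p.2 * q.1) • B (p + q) := by
    rintro ⟨p1, p2⟩ ⟨q1, q2⟩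
    have key : (uI ^ p1 * uJ ^ p2) * (uI ^ q1 * uJ ^ q2)
        = (-1) ^ (p2 * q1) * (uI ^ (p1 + q1) * uJ ^ (p2 + q2)) := by
      rw [mul_assoc, ← mul_assoc (uJ ^ p2), hc2 q1 p2]
      have cz : (-1 : Qˣ) ^ (p2 * q1) * uI ^ p1 = uI ^ p1 * (-1) ^ (p2 * q1) :=
        (((Commute.neg_one_left uI).zpow_left (p2 * q1)).zpow_right p1).eq
      rw [zpow_add, zpow_add, ← mul_assoc, ← mul_assoc, ← cz]
      group
    have := congrArg (Units.val) key
    rw [hB, hB, ← Units.val_mul, this]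
    rw [Units.val_mul, hsgval, Prod.mk_add_mk, hB]
    rw [Algebra.smul_def]
  -- the degree-(0,0) coordinate functional
  set e : Q →ₗ[k] k := Finsupp.lapply ((0 : ℤ), (0 : ℤ)) ∘ₗ B.repr.toLinearMap with hedef
  have he : ∀ x : Q, e x = B.repr x (0, 0) := fun x => rfl
  have heB : ∀ r : ℤ × ℤ, e (B r) = if r = 0 then 1 else 0 := by
    intro r
    rw [he, B.repr_self, Finsupp.single_apply]
    rfl
  have heBB : ∀ p q : ℤ × ℤ,
      e (B p * B q) = sg (p.2 * q.1) * (if p + q = 0 then 1 else 0) := by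
    intro p q
    rw [hBm, map_smul, smul_eq_mul, heB]
  have hsgpar : ∀ a b : ℤ, (Even a ↔ Even b) → sg a = sg b := by
    intro a b hab
    simp only [hsgdef]
    by_cases h : Even a
    · rw [if_pos h, if_pos (hab.mp h)]
    · rw [if_neg h, if_neg (fun hb => h (hab.mpr hb))]
  have hsgne : ∀ m : ℤ, sg m ≠ 0 := by
    intro m
    simp only [hsgdef]
    split_ifs
    · exact one_ne_zero
    · exact neg_ne_zero.mpr one_ne_zero
  -- trace property
  have htr : ∀ a b : Q, e (a * b) = e (b * a) := by
    have key : (LinearMap.mul k Q).compr₂ e = (LinearMap.mul k Q).flip.compr₂ e := by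
      refine B.ext fun p => B.ext fun q => ?_
      show e (B p * B q) = e (B q * B p)
      rw [heBB, heBB]
      by_cases h : p + q = 0
      · have hq : q = -p := eq_neg_of_add_eq_zero_right h
        subst hq
        have h2 : p.2 * (-p).1 = (-p).2 * p.1 := by
          simp only [Prod.fst_neg, Prod.snd_neg]
          ring
        rw [h2, if_pos h, if_pos (by rw [add_comm] at h; exact h)]
      · rw [if_neg h, if_neg (fun h' => h (by rwa [add_comm] at h'))]
        rw [mul_zero, mul_zero]
    intro a b
    exact DFunLike.congr_fun (DFunLike.congr_fun key a) b
  -- coordinate extraction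
  have hrepr : ∀ (c : Q) (m : ℤ × ℤ), e (c * B (-m)) = sg (m.1 * m.2) * B.repr c m := by
    intro c m
    have key : e ∘ₗ LinearMap.mulRight k (B (-m))
        = sg (m.1 * m.2) • (Finsupp.lapply m ∘ₗ B.repr.toLinearMap) := by
      refine B.ext fun s => ?_
      show e (B s * B (-m)) = sg (m.1 * m.2) • ((B.repr (B s)) m)
      rw [heBB, B.repr_self, Finsupp.single_apply, smul_eq_mul]
      by_cases hsm : s = m
      · subst hsm
        rw [if_pos (add_neg_cancel s), if_pos rfl, mul_one, mul_one]
        refine hsgpar _ _ ?_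
        simp only [Prod.fst_neg, Int.even_mul, even_neg]
        tauto
      · rw [if_neg (fun h0 => hsm (by rwa [add_neg_eq_zero] at h0)), if_neg hsm,
          mul_zero, mul_zero]
    have := DFunLike.congr_fun key c
    simpa using this
  have hkill : ∀ c : Q, (∀ q : Q, e (c * q) = 0) → c = 0 := by
    intro c hc
    have hco : ∀ m, B.repr c m = 0 := by
      intro m
      have h0 := hc (B (-m))
      rw [hrepr] at h0
      exact (mul_eq_zero.mp h0).resolve_left (hsgne _)
    exact B.repr.map_eq_zero_iff.mp (Finsupp.ext hco)
  -- the span of commutators in Q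
  set S : Submodule k Q := Submodule.span k {x | ∃ a b : Q, a * b - b * a = x} with hSdef
  have hCoordEven : ∀ c ∈ S, ∀ m : ℤ × ℤ, Even m.1 → Even m.2 → B.repr c m = 0 := by
    intro c hc m hm1 hm2
    set F : Q →ₗ[k] k := Finsupp.lapply m ∘ₗ B.repr.toLinearMap with hFdef
    have hFB : ∀ r : ℤ × ℤ, F (B r) = if r = m then 1 else 0 := by
      intro r
      show (B.repr (B r)) m = _
      rw [B.repr_self, Finsupp.single_apply]
    have keyF : (LinearMap.mul k Q).compr₂ F = (LinearMap.mul k Q).flip.compr₂ F := by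
      refine B.ext fun p => B.ext fun q => ?_
      show F (B p * B q) = F (B q * B p)
      rw [hBm, hBm, map_smul, map_smul, hFB, hFB, smul_eq_mul, smul_eq_mul]
      by_cases h : p + q = m
      · have hq1 : q.1 = m.1 - p.1 := by
          have := congrArg Prod.fst h
          simp at this; omega
        have hq2 : q.2 = m.2 - p.2 := by
          have := congrArg Prod.snd h
          simp at this; omega
        rw [if_pos h, if_pos (by rwa [add_comm] at h)]
        refine congrArg (· * _) (hsgpar _ _ ?_)
        rw [hq1, hq2]
        simp only [Int.even_mul, Int.even_sub]
        tauto
      · rw [if_neg h, if_neg (fun h' => h (by rwa [add_comm] at h')), mul_zero, mul_zero]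
    have hgen : {x | ∃ a b : Q, a * b - b * a = x} ⊆ (LinearMap.ker F : Set Q) := by
      rintro x ⟨a, b, rfl⟩
      have h1 : F (a * b) = F (b * a) := DFunLike.congr_fun (DFunLike.congr_fun keyF a) b
      simp [LinearMap.mem_ker, map_sub, h1]
    have : S ≤ LinearMap.ker F := Submodule.span_le.mpr hgen
    exact this hc
  have hOddKill : ∀ c : Q, (∀ a b : Q, e (c * (a * b - b * a)) = 0) →
      ∀ m : ℤ × ℤ, ¬ (Even m.1 ∧ Even m.2) → B.repr c m = 0 := by
    intro c hc m hm
    have hstep : ∀ p q : ℤ × ℤ, (sg (p.2 * q.1) - sg (q.2 * p.1)) * e (c * B (p + q)) = 0 := by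
      intro p q
      have h0 := hc (B p) (B q)
      rw [hBm, hBm, add_comm q p, ← sub_smul, mul_smul_comm, map_smul, smul_eq_mul] at h0
      exact h0
    have hfin : e (c * B (-m)) = 0 → B.repr c m = 0 := by
      intro h0
      rw [hrepr] at h0
      exact (mul_eq_zero.mp h0).resolve_left (hsgne _)
    by_cases hm1 : Even m.1
    · have hm2 : ¬ Even m.2 := fun h => hm ⟨hm1, h⟩
      have h0 := hstep (1, 0) (-m.1 - 1, -m.2)
      have hpq : ((1 : ℤ), (0 : ℤ)) + (-m.1 - 1, -m.2) = -m := by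
        rw [Prod.mk_add_mk]
        apply Prod.ext <;> simp <;> ring
      rw [hpq] at h0
      have hs1 : sg ((1, (0:ℤ)).2 * ((-m.1 - 1, -m.2)).1) = 1 := by
        simp [hsgdef]
      have hs2 : sg (((-m.1 - 1, -m.2)).2 * ((1:ℤ), (0:ℤ)).1) = -1 := by
        simp [hsgdef, even_neg, hm2]
      rw [hs1, hs2] at h0
      apply hfin
      have h2 : (1 : k) - (-1) ≠ 0 := by norm_num
      exact (mul_eq_zero.mp h0).resolve_left h2
    · have h0 := hstep (0, 1) (-m.1, -m.2 - 1)
      have hpq : ((0 : ℤ), (1 : ℤ)) + (-m.1, -m.2 - 1) = -m := by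
        rw [Prod.mk_add_mk]
        apply Prod.ext <;> simp <;> ring
      rw [hpq] at h0
      have hs1 : sg (((0:ℤ), (1:ℤ)).2 * ((-m.1, -m.2 - 1)).1) = -1 := by
        simp [hsgdef, even_neg, hm1]
      have hs2 : sg (((-m.1, -m.2 - 1)).2 * ((0:ℤ), (1:ℤ)).1) = 1 := by
        simp [hsgdef]
      rw [hs1, hs2] at h0
      apply hfin
      have h2 : (-1 : k) - 1 ≠ 0 := by norm_num
      exact (mul_eq_zero.mp h0).resolve_left h2
  -- Φ in terms of trace
  have hΦ' : ∀ X Y : Matrix (Fin 2) (Fin 2) Q, Φ X Y = e (Matrix.trace (X * Y)) := by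
    intro X Y
    rw [hΦ]
    rw [show e (Matrix.trace (X * Y)) = B.repr (Matrix.trace (X * Y)) (0, 0) from rfl]
    congr 1
    simp only [Matrix.trace_fin_two, Matrix.mul_apply, Fin.sum_univ_two]
    abel
  have hsymM : ∀ A C : Matrix (Fin 2) (Fin 2) Q,
      e (Matrix.trace (A * C)) = e (Matrix.trace (C * A)) := by
    intro A C
    simp only [Matrix.trace_fin_two, Matrix.mul_apply, Fin.sum_univ_two, map_add]
    rw [htr (A 0 0) (C 0 0), htr (A 0 1) (C 1 0), htr (A 1 0) (C 0 1), htr (A 1 1) (C 1 1)]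
    ring
  have hsymm : ∀ X Y, Φ X Y = Φ Y X := by
    intro X Y
    rw [hΦ', hΦ', hsymM]
  have hinv : ∀ X Y Z, Φ ⁅X, Y⁆ Z = Φ X ⁅Y, Z⁆ := by
    intro X Y Z
    rw [hΦ', hΦ', Ring.lie_def, Ring.lie_def]
    have h1 : (X * Y - Y * X) * Z = X * (Y * Z) - Y * (X * Z) := by
      rw [sub_mul, mul_assoc, mul_assoc]
    have h2 : X * (Y * Z - Z * Y) = X * (Y * Z) - X * (Z * Y) := by
      rw [mul_sub]
    rw [h1, h2, Matrix.trace_sub, Matrix.trace_sub, map_sub, map_sub]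
    congr 1
    have h3 : e (Matrix.trace (Y * (X * Z))) = e (Matrix.trace ((X * Z) * Y)) := hsymM _ _
    rw [h3, mul_assoc]
  -- nondegeneracy
  have hnd : ∀ X ∈ LieAlgebra.derivedSeries k (Matrix (Fin 2) (Fin 2) Q) 1,
      (∀ Y ∈ LieAlgebra.derivedSeries k (Matrix (Fin 2) (Fin 2) Q) 1, Φ X Y = 0) → X = 0 := by
    intro X hX hXO
    have hmemD : ∀ A C : Matrix (Fin 2) (Fin 2) Q,
        ⁅A, C⁆ ∈ LieAlgebra.derivedSeries k (Matrix (Fin 2) (Fin 2) Q) 1 := by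
      intro A C
      rw [LieAlgebra.derivedSeries_def, LieAlgebra.derivedSeriesOfIdeal_succ,
        LieAlgebra.derivedSeriesOfIdeal_zero]
      exact LieSubmodule.lie_mem_lie (LieSubmodule.mem_top _) (LieSubmodule.mem_top _)
    -- brackets with matrix units
    have hb01 : ∀ q : Q, (⁅(!![0,q;0,0] : Matrix (Fin 2) (Fin 2) Q), !![0,0;0,1]⁆ :
        Matrix (Fin 2) (Fin 2) Q) = !![0,q;0,0] := by
      intro q
      rw [Ring.lie_def]
      ext a b
      fin_cases a <;> fin_cases b <;>
        simp [Matrix.mul_apply, Fin.sum_univ_two]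
    have hb10 : ∀ q : Q, (⁅(!![0,0;q,0] : Matrix (Fin 2) (Fin 2) Q), !![1,0;0,0]⁆ :
        Matrix (Fin 2) (Fin 2) Q) = !![0,0;q,0] := by
      intro q
      rw [Ring.lie_def]
      ext a b
      fin_cases a <;> fin_cases b <;>
        simp [Matrix.mul_apply, Fin.sum_univ_two]
    have hbd : ∀ a b : Q, (⁅(!![0,a;0,0] : Matrix (Fin 2) (Fin 2) Q), !![0,0;b,0]⁆ :
        Matrix (Fin 2) (Fin 2) Q) = !![a*b,0;0,-(b*a)] := by
      intro a b
      rw [Ring.lie_def]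
      ext x y
      fin_cases x <;> fin_cases y <;>
        simp [Matrix.mul_apply, Fin.sum_univ_two]
    -- entry tests
    have hX01 : X 0 1 = 0 := by
      apply hkill
      intro q
      have h0 := hXO _ (hmemD !![0,0;q,0] !![1,0;0,0])
      rw [hb10, hΦ] at h0
      simpa [he] using h0
    have hX10 : X 1 0 = 0 := by
      apply hkill
      intro q
      have h0 := hXO _ (hmemD !![0,q;0,0] !![0,0;0,1])
      rw [hb01, hΦ] at h0
      simpa [he] using h0
    have hdiag : X 0 0 = X 1 1 := by
      have h1 : X 0 0 - X 1 1 = 0 := by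
        apply hkill
        intro q
        have h0 := hXO _ (hmemD !![0,q;0,0] !![0,0;1,0])
        rw [hbd, hΦ] at h0
        rw [he, sub_mul]
        simpa [he, mul_one, one_mul, mul_neg, sub_eq_add_neg] using h0
      exact sub_eq_zero.mp h1
    set d : Q := X 1 1 with hddef
    have hdcomm : ∀ a b : Q, e (d * (a * b - b * a)) = 0 := by
      intro a b
      have h0 := hXO _ (hmemD !![0,a;0,0] !![0,0;b,0])
      rw [hbd, hΦ] at h0
      have h0' : e (X 0 0 * (a * b) + X 1 1 * (-(b * a))) = 0 := by
        simpa [he] using h0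
      rw [hdiag] at h0'
      have harg : d * (a * b - b * a) = X 1 1 * (a * b) + X 1 1 * (-(b * a)) := by
        rw [mul_sub, mul_neg, sub_eq_add_neg]
      rw [harg]
      exact h0'
    -- trace of X lies in the span of commutators
    have htrS : Matrix.trace X ∈ S := by
      have hX2 : X ∈ ⁅(⊤ : LieIdeal k (Matrix (Fin 2) (Fin 2) Q)),
          (⊤ : LieIdeal k (Matrix (Fin 2) (Fin 2) Q))⁆ := by
        rw [LieAlgebra.derivedSeries_def, LieAlgebra.derivedSeriesOfIdeal_succ,
          LieAlgebra.derivedSeriesOfIdeal_zero] at hX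
        exact hX
      have hX' : X ∈ Submodule.span k
          {m | ∃ (x : (⊤ : LieIdeal k (Matrix (Fin 2) (Fin 2) Q)))
            (n : (⊤ : LieIdeal k (Matrix (Fin 2) (Fin 2) Q))), ⁅(x : Matrix (Fin 2) (Fin 2) Q),
              (n : Matrix (Fin 2) (Fin 2) Q)⁆ = m} := by
        rw [← LieSubmodule.lieIdeal_oper_eq_linear_span]
        exact (LieSubmodule.mem_toSubmodule _).mpr hX2
      set T : Matrix (Fin 2) (Fin 2) Q →ₗ[k] Q := Matrix.traceLinearMap (Fin 2) k Q with hTdef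
      have hle : Submodule.span k {m | ∃ (x : (⊤ : LieIdeal k (Matrix (Fin 2) (Fin 2) Q)))
          (n : (⊤ : LieIdeal k (Matrix (Fin 2) (Fin 2) Q))), ⁅(x : Matrix (Fin 2) (Fin 2) Q),
            (n : Matrix (Fin 2) (Fin 2) Q)⁆ = m} ≤ Submodule.comap T S := by
        apply Submodule.span_le.mpr
        rintro x ⟨⟨A, -⟩, ⟨C, -⟩, rfl⟩
        show T ⁅A, C⁆ ∈ S
        have htr2 : T ⁅A, C⁆ = (A 0 0 * C 0 0 - C 0 0 * A 0 0) + (A 0 1 * C 1 0 - C 1 0 * A 0 1)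
            + (A 1 0 * C 0 1 - C 0 1 * A 1 0) + (A 1 1 * C 1 1 - C 1 1 * A 1 1) := by
          show Matrix.trace ⁅A, C⁆ = _
          rw [Ring.lie_def]
          simp only [Matrix.trace_fin_two, Matrix.sub_apply, Matrix.mul_apply, Fin.sum_univ_two]
          abel
        rw [htr2]
        exact add_mem (add_mem (add_mem (Submodule.subset_span ⟨_, _, rfl⟩)
          (Submodule.subset_span ⟨_, _, rfl⟩)) (Submodule.subset_span ⟨_, _, rfl⟩))
          (Submodule.subset_span ⟨_, _, rfl⟩)
      exact hle hX'
    have hd0 : d = 0 := by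
      apply B.repr.map_eq_zero_iff.mp
      apply Finsupp.ext
      intro m
      by_cases hm : Even m.1 ∧ Even m.2
      · have h2 : B.repr (Matrix.trace X) m = 0 := hCoordEven _ htrS m hm.1 hm.2
        have htrX : Matrix.trace X = d + d := by
          rw [Matrix.trace_fin_two, hdiag]
        rw [htrX, map_add, Finsupp.add_apply] at h2
        have h3 : (2 : k) * B.repr d m = 0 := by rw [two_mul]; exact h2
        have h4 : (2 : k) ≠ 0 := two_ne_zero
        exact (mul_eq_zero.mp h3).resolve_left h4
      · exact hOddKill d hdcomm m hm
    refine Matrix.ext fun a b => ?_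
    fin_cases a <;> fin_cases b
    · exact hdiag.trans hd0
    · exact hX01
    · exact hX10
    · exact hd0
  exact ⟨hsymm, hinv, hnd⟩
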